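/- Let Ū = (ρ̄, m̄, Ē) ∈ 𝒢 with pressure tensor p̄ := p(Ū) (entries p̄₁₁, p̄₁₂, p̄₂₂). Let t₁, t₂ ∈ ℝ, T := [[t₁, t₂],[0, 1]], and Û := (ρ̄, Tm̄, TĒTᵀ). Set q := ((1−t₁)m̄₁ − t₂m̄₂)², N := ‖p̄^{-1/2} T p̄^{1/2}‖₂², and for θ ∈ [0,1) define f₁(θ) := (1−θ)/N, f₂(θ) := θρ̄p̄₁₁/(θρ̄p̄₁₁ + q), f₃(θ) := θρ̄·det(p̄)/(θρ̄·det(p̄) + q·p̄₂₂), and f(θ) := f₁(0) if θ = 0 and f(θ) := min{f₁(θ), f₂(θ), f₃(θ)} if θ ∈ (0,1). Assume θ ∈ [0,1) with (θ = 0 → q = 0). Then for every ξ with 0 < ξ ≤ f(θ), the state Ū − ξÛ belongs to 𝒢̄. -/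

import Mathlib

open Matrix

noncomputable section

/-- A state is a triple `(ρ, m, E)` with `ρ : ℝ`, `m : ℝ²`, `E` a 2×2 real matrix. -/
abbrev Mat2 := Matrix (Fin 2) (Fin 2) ℝ

/-- The pressure tensor `p(U) = 2E - (1/ρ) m mᵀ`. -/
def pTensor (ρ : ℝ) (m : Fin 2 → ℝ) (E : Mat2) : Mat2 :=
  (2 : ℝ) • E - ρ⁻¹ • vecMulVec m m

/-- `φ(U; z, u*) = zᵀEz − (m·z)(u*·z) + (ρ/2)(u*·z)²`. -/
def phi (ρ : ℝ) (m : Fin 2 → ℝ) (E : Mat2) (z u : Fin 2 → ℝ) : ℝ :=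
  z ⬝ᵥ (E *ᵥ z) - (m ⬝ᵥ z) * (u ⬝ᵥ z) + (ρ / 2) * (u ⬝ᵥ z) ^ 2

/-- The positive semidefinite square root of a positive semidefinite matrix (as defined in the
older Mathlib, where it was `Matrix.PosSemidef.sqrt`; it has since been removed). -/
def Matrix.PosSemidef.sqrt {n : Type*} [Fintype n] [DecidableEq n] {A : Matrix n n ℝ}
    (hA : A.PosSemidef) : Matrix n n ℝ :=
  hA.1.eigenvectorUnitary.1 * diagonal ((↑) ∘ (√·) ∘ hA.1.eigenvalues) *
    (star hA.1.eigenvectorUnitary : Matrix n n ℝ)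

/-- The admissible set `𝒢`: states with positive density and positive definite pressure tensor. -/
def G : Set (ℝ × (Fin 2 → ℝ) × Mat2) :=
  {U | 0 < U.1 ∧ (pTensor U.1 U.2.1 U.2.2).PosDef}

/-- The closed admissible set `𝒢̄`: states (so `E` symmetric) with `ρ ≥ 0` and
`φ(U; z, u*) ≥ 0` for all `z, u*`. -/
def Gbar : Set (ℝ × (Fin 2 → ℝ) × Mat2) :=
  {U | 0 ≤ U.1 ∧ U.2.2.IsSymm ∧ ∀ z u : Fin 2 → ℝ, 0 ≤ phi U.1 U.2.1 U.2.2 z u}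

set_option maxHeartbeats 2000000
set_option synthInstance.maxHeartbeats 1000000

lemma Matrix.PosSemidef.sqrt_mul_self {A : Mat2} (hA : A.PosSemidef) :
    hA.sqrt * hA.sqrt = A := by
  have hU : (star hA.1.eigenvectorUnitary : Mat2) * hA.1.eigenvectorUnitary.1 = 1 :=
    Unitary.coe_star_mul_self _
  have hD : diagonal ((fun x : ℝ => (x : ℝ)) ∘ (fun x => √x) ∘ hA.1.eigenvalues) *
      diagonal ((fun x : ℝ => (x : ℝ)) ∘ (fun x => √x) ∘ hA.1.eigenvalues)
      = diagonal (RCLike.ofReal ∘ hA.1.eigenvalues) := by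
    rw [diagonal_mul_diagonal]
    congr 1; funext i
    simp [Real.mul_self_sqrt (hA.eigenvalues_nonneg i)]
  unfold Matrix.PosSemidef.sqrt
  conv_rhs => rw [hA.1.spectral_theorem, Unitary.conjStarAlgAut_apply]
  calc _ = hA.1.eigenvectorUnitary.1 *
      diagonal ((fun x : ℝ => (x : ℝ)) ∘ (fun x => √x) ∘ hA.1.eigenvalues) *
      ((star hA.1.eigenvectorUnitary : Mat2) * hA.1.eigenvectorUnitary.1) *
      diagonal ((fun x : ℝ => (x : ℝ)) ∘ (fun x => √x) ∘ hA.1.eigenvalues) *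
      (star hA.1.eigenvectorUnitary : Mat2) := by
        simp only [Matrix.mul_assoc]
    _ = _ := by rw [hU, Matrix.mul_one, Matrix.mul_assoc _ (diagonal _) (diagonal _), hD]

lemma Matrix.PosSemidef.sqrt_transpose {A : Mat2} (hA : A.PosSemidef) :
    hA.sqrtᵀ = hA.sqrt := by
  rw [← Matrix.conjTranspose_eq_transpose_of_trivial]
  unfold Matrix.PosSemidef.sqrt
  rw [Matrix.conjTranspose_mul, Matrix.conjTranspose_mul, Matrix.diagonal_conjTranspose,
    ← Matrix.star_eq_conjTranspose, ← Matrix.star_eq_conjTranspose, star_star, Matrix.mul_assoc]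
  simp only [Pi.star_def, star_trivial]

lemma aux_norm_sq_eq_dot (u : Fin 2 → ℝ) :
    ‖(WithLp.equiv 2 (Fin 2 → ℝ)).symm u‖ ^ 2 = u ⬝ᵥ u := by
  rw [EuclideanSpace.norm_eq, Real.sq_sqrt (by positivity)]
  simp [dotProduct, WithLp.equiv_symm_apply, PiLp.toLp_apply, sq]

lemma aux_norm_bound (M : Mat2) (v : Fin 2 → ℝ) :
    (M *ᵥ v) ⬝ᵥ (M *ᵥ v) ≤ ‖toEuclideanCLM (𝕜 := ℝ) M‖ ^ 2 * (v ⬝ᵥ v) := by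
  have h1 := (toEuclideanCLM (𝕜 := ℝ) M).le_opNorm ((WithLp.equiv 2 (Fin 2 → ℝ)).symm v)
  have h2 : toEuclideanCLM (𝕜 := ℝ) M ((WithLp.equiv 2 (Fin 2 → ℝ)).symm v)
      = (WithLp.equiv 2 (Fin 2 → ℝ)).symm (M *ᵥ v) := by
    rw [WithLp.equiv_symm_apply, toEuclideanCLM_toLp]
  rw [h2] at h1
  have h3 := pow_le_pow_left₀ (norm_nonneg _) h1 2
  rw [aux_norm_sq_eq_dot, mul_pow, aux_norm_sq_eq_dot] at h3
  exact h3

lemma aux_norm_transpose (M : Mat2) :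
    ‖toEuclideanCLM (𝕜 := ℝ) Mᵀ‖ = ‖toEuclideanCLM (𝕜 := ℝ) M‖ := by
  have h : Mᵀ = star M := (Matrix.conjTranspose_eq_transpose_of_trivial M).symm
  rw [h, map_star, ContinuousLinearMap.star_eq_adjoint]
  exact (ContinuousLinearMap.adjoint).norm_map _

/-- Lemma 3.1 of the paper: for `0 < ξ ≤ f(θ)`, the state `Ū − ξÛ` lies in `𝒢̄`. -/
theorem state_minus_xi_hat_mem_closure
    (ρ : ℝ) (m : Fin 2 → ℝ) (E : Mat2) (hρ : 0 < ρ) (hE : E.IsSymm)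
    (hp : (pTensor ρ m E).PosDef)
    (t1 t2 : ℝ) (T : Mat2) (hT : T = !![t1, t2; 0, 1])
    (q Nv : ℝ)
    (hq : q = ((1 - t1) * m 0 - t2 * m 1) ^ 2)
    (hN : Nv = ‖toEuclideanCLM (𝕜 := ℝ)
        ((hp.posSemidef.sqrt)⁻¹ * T * hp.posSemidef.sqrt)‖ ^ 2)
    (θ : ℝ) (hθ0 : 0 ≤ θ) (hθ1 : θ < 1) (hθq : θ = 0 → q = 0)
    (f : ℝ)
    (hf : f = if θ = 0 then (1 - (0:ℝ)) / Nv
      else min ((1 - θ) / Nv)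
        (min (θ * ρ * (pTensor ρ m E) 0 0 / (θ * ρ * (pTensor ρ m E) 0 0 + q))
             (θ * ρ * (pTensor ρ m E).det /
               (θ * ρ * (pTensor ρ m E).det + q * (pTensor ρ m E) 1 1))))
    (ξ : ℝ) (hξ0 : 0 < ξ) (hξf : ξ ≤ f) :
    (ρ - ξ * ρ, m - ξ • (T *ᵥ m), E - ξ • (T * E * Tᵀ)) ∈ Gbar := by
  have hρ' : ρ ≠ 0 := hρ.ne'
  have hE10 : E 1 0 = E 0 1 := by
    have h := congrFun (congrFun hE 1) 0
    simpa [Matrix.transpose_apply] using h.symm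
  -- the square root
  set S : Mat2 := hp.posSemidef.sqrt with hSdef
  set B : Mat2 := S⁻¹ * T * S with hBdef
  have hSS : S * S = pTensor ρ m E := hp.posSemidef.sqrt_mul_self
  have hSt : Sᵀ = S := by
    exact hp.posSemidef.sqrt_transpose
  have hdetP : 0 < (pTensor ρ m E).det := hp.det_pos
  have hdetS : IsUnit S.det := by
    have h : S.det * S.det = (pTensor ρ m E).det := by rw [← Matrix.det_mul, hSS]
    refine isUnit_iff_ne_zero.mpr (fun hc => ?_)
    rw [hc, mul_zero] at h
    exact hdetP.ne (h)
  have hS1 : S * S⁻¹ = 1 := Matrix.mul_nonsing_inv _ hdetS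
  have hS2 : S⁻¹ * S = 1 := Matrix.nonsing_inv_mul _ hdetS
  have hSinvt : S⁻¹ᵀ = S⁻¹ := by rw [Matrix.transpose_nonsing_inv, hSt]
  -- decomposition T P Tᵀ = S B Bᵀ S
  have hmul1 : S * B = T * S := by
    rw [hBdef]
    simp only [← Matrix.mul_assoc]
    rw [hS1, Matrix.one_mul]
  have hmul2 : Bᵀ * S = S * Tᵀ := by
    rw [hBdef]
    simp only [Matrix.transpose_mul, hSt, hSinvt, Matrix.mul_assoc]
    rw [hS2, Matrix.mul_one]
  have hfact : T * pTensor ρ m E * Tᵀ = S * B * (Bᵀ * S) := by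
    rw [hmul1, hmul2, ← hSS]
    simp only [Matrix.mul_assoc]
  -- Nv ≥ 1
  have hNv1 : (1 : ℝ) ≤ Nv := by
    obtain ⟨v, hv, hv0⟩ : ∃ v : Fin 2 → ℝ, T *ᵥ v = v ∧ v ≠ 0 := by
      by_cases h : t1 = 1
      · refine ⟨![1, 0], ?_, ?_⟩
        · funext i; fin_cases i <;>
            simp [hT, Matrix.mulVec, dotProduct, Fin.sum_univ_two, h]
        · intro hc; simpa using congrFun hc 0
      · refine ⟨![t2, 1 - t1], ?_, ?_⟩
        · funext i; fin_cases i <;>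
            simp [hT, Matrix.mulVec, dotProduct, Fin.sum_univ_two] <;> ring
        · intro hc
          have := congrFun hc 1
          simp at this
          exact h (by linarith)
    have hSw : S *ᵥ (S⁻¹ *ᵥ v) = v := by
      rw [Matrix.mulVec_mulVec, hS1, Matrix.one_mulVec]
    have hBw : B *ᵥ (S⁻¹ *ᵥ v) = S⁻¹ *ᵥ v := by
      rw [hBdef, ← Matrix.mulVec_mulVec, ← Matrix.mulVec_mulVec, hSw, hv]
    have hw0 : S⁻¹ *ᵥ v ≠ 0 := fun hc => hv0 (by rw [← hSw, hc, Matrix.mulVec_zero])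
    set W := (WithLp.equiv 2 (Fin 2 → ℝ)).symm (S⁻¹ *ᵥ v) with hWdef
    have hW : toEuclideanCLM (𝕜 := ℝ) B W = W := by
      rw [hWdef, WithLp.equiv_symm_apply, toEuclideanCLM_toLp, hBw]
    have hWne : W ≠ 0 := by
      intro hc
      exact hw0 (by simpa [hWdef] using congrArg (WithLp.equiv 2 (Fin 2 → ℝ)) hc)
    have hWpos : 0 < ‖W‖ := norm_pos_iff.mpr hWne
    have hle := (toEuclideanCLM (𝕜 := ℝ) B).le_opNorm W
    rw [hW] at hle
    have h1 : 1 ≤ ‖toEuclideanCLM (𝕜 := ℝ) B‖ := by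
      by_contra hcon
      push_neg at hcon
      nlinarith
    rw [hN]
    nlinarith
  have hNvpos : 0 < Nv := lt_of_lt_of_le one_pos hNv1
  -- diagonal entries of P
  have hp11 : 0 < pTensor ρ m E 1 1 := by
    have h := hp.dotProduct_mulVec_pos (x := ![0, 1]) (by intro hc; simpa using congrFun hc 1)
    simpa [dotProduct, Matrix.mulVec, Fin.sum_univ_two] using h
  have hq0 : 0 ≤ q := hq ▸ sq_nonneg _
  -- bounds on ξ
  have hξN : ξ * Nv ≤ 1 - θ := by
    by_cases hθ : θ = 0
    · rw [hf, if_pos hθ] at hξf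
      rw [hθ]
      simpa using (le_div_iff₀ hNvpos).mp hξf
    · rw [hf, if_neg hθ] at hξf
      exact (le_div_iff₀ hNvpos).mp (le_trans hξf (min_le_left _ _))
  have hξ1θ : ξ ≤ 1 - θ := by nlinarith
  have hξ1 : ξ ≤ 1 := by linarith
  have hq3 : ξ * (q * pTensor ρ m E 1 1) ≤ (1 - ξ) * (θ * ρ * (pTensor ρ m E).det) := by
    by_cases hθ : θ = 0
    · rw [hθ, hθq hθ]; simp
    · have hθpos : 0 < θ := lt_of_le_of_ne hθ0 (Ne.symm hθ)
      have hDpos : 0 < θ * ρ * (pTensor ρ m E).det := by positivity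
      have hdenpos : 0 < θ * ρ * (pTensor ρ m E).det + q * pTensor ρ m E 1 1 := by nlinarith
      have h3 : ξ ≤ θ * ρ * (pTensor ρ m E).det /
          (θ * ρ * (pTensor ρ m E).det + q * pTensor ρ m E 1 1) := by
        rw [hf, if_neg hθ] at hξf
        exact le_trans hξf (le_trans (min_le_right _ _) (min_le_right _ _))
      have h4 := (le_div_iff₀ hdenpos).mp h3
      nlinarith
  -- the key pointwise estimate
  have key : ∀ z : Fin 2 → ℝ,
      ((m - ξ • (T *ᵥ m)) ⬝ᵥ z) ^ 2
        ≤ 2 * (ρ - ξ * ρ) * (z ⬝ᵥ ((E - ξ • (T * E * Tᵀ)) *ᵥ z))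
      ∧ 0 ≤ z ⬝ᵥ ((E - ξ • (T * E * Tᵀ)) *ᵥ z) := by
    intro z
    set a : ℝ := z ⬝ᵥ (pTensor ρ m E *ᵥ z) with hadef
    set bb : ℝ := z ⬝ᵥ ((T * pTensor ρ m E * Tᵀ) *ᵥ z) with hbbdef
    -- operator norm bound : bb ≤ Nv * a
    have ea : a = (S *ᵥ z) ⬝ᵥ (S *ᵥ z) := by
      rw [hadef, ← hSS, ← Matrix.mulVec_mulVec, Matrix.dotProduct_mulVec,
        ← Matrix.mulVec_transpose, hSt]
    have ebb : bb = (Bᵀ *ᵥ (S *ᵥ z)) ⬝ᵥ (Bᵀ *ᵥ (S *ᵥ z)) := by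
      rw [hbbdef, hfact]
      rw [show (S * B * (Bᵀ * S)) *ᵥ z = S *ᵥ (B *ᵥ (Bᵀ *ᵥ (S *ᵥ z))) by
        simp only [Matrix.mulVec_mulVec, Matrix.mul_assoc]]
      rw [Matrix.dotProduct_mulVec, ← Matrix.mulVec_transpose, hSt,
        Matrix.dotProduct_mulVec, ← Matrix.mulVec_transpose]
    have hbble : bb ≤ Nv * a := by
      rw [ebb, ea, hN]
      have := aux_norm_bound Bᵀ (S *ᵥ z)
      rwa [aux_norm_transpose] at this
    -- scalar identities
    have Ha : pTensor ρ m E 1 1 * a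
        = (pTensor ρ m E 0 1 * z 0 + pTensor ρ m E 1 1 * z 1) ^ 2
          + (pTensor ρ m E).det * z 0 ^ 2 := by
      rw [hadef]
      simp only [pTensor, Matrix.det_fin_two, Matrix.mulVec, dotProduct,
        Fin.sum_univ_two, Matrix.sub_apply, Matrix.smul_apply, vecMulVec_apply,
        smul_eq_mul, hE10]
      field_simp
      ring
    have ha0 : 0 ≤ a := by nlinarith [sq_nonneg (pTensor ρ m E 0 1 * z 0 + pTensor ρ m E 1 1 * z 1), sq_nonneg (z 0)]
    have h2 : θ * a ≤ a - ξ * bb := by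
      nlinarith [mul_le_mul_of_nonneg_left hbble hξ0.le,
        mul_le_mul_of_nonneg_right hξN ha0]
    have h3 : ξ * (q * z 0 ^ 2) ≤ (1 - ξ) * (θ * ρ * a) := by
      have t1' := mul_le_mul_of_nonneg_right hq3 (sq_nonneg (z 0))
      have c1 : 0 ≤ (1 - ξ) * (θ * ρ) := by
        apply mul_nonneg (by linarith) (by positivity)
      have c2 : (pTensor ρ m E).det * z 0 ^ 2 ≤ pTensor ρ m E 1 1 * a := by
        nlinarith [sq_nonneg (pTensor ρ m E 0 1 * z 0 + pTensor ρ m E 1 1 * z 1)]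
      nlinarith [mul_le_mul_of_nonneg_left c2 c1]
    have Hident : 2 * (ρ - ξ * ρ) * (z ⬝ᵥ ((E - ξ • (T * E * Tᵀ)) *ᵥ z))
        - ((m - ξ • (T *ᵥ m)) ⬝ᵥ z) ^ 2
        = (1 - ξ) * ρ * (a - ξ * bb) - ξ * (((1 - t1) * m 0 - t2 * m 1) * z 0) ^ 2 := by
      rw [hadef, hbbdef]
      simp only [pTensor, hT, Matrix.mulVec, Matrix.mul_apply, dotProduct,
        Fin.sum_univ_two, Matrix.sub_apply, Matrix.smul_apply, Matrix.transpose_apply,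
        vecMulVec_apply, smul_eq_mul, Pi.sub_apply, Pi.smul_apply,
        Matrix.cons_val', Matrix.cons_val_zero, Matrix.cons_val_one, Matrix.head_cons,
        Matrix.empty_val', Matrix.cons_val_fin_one, Matrix.head_fin_const, Matrix.of_apply]
      field_simp
      ring
    have hD : ((m - ξ • (T *ᵥ m)) ⬝ᵥ z) ^ 2
        ≤ 2 * (ρ - ξ * ρ) * (z ⬝ᵥ ((E - ξ • (T * E * Tᵀ)) *ᵥ z)) := by
      have hde : 2 * (ρ - ξ * ρ) * (z ⬝ᵥ ((E - ξ • (T * E * Tᵀ)) *ᵥ z))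
          - ((m - ξ • (T *ᵥ m)) ⬝ᵥ z) ^ 2
          = (1 - ξ) * ρ * (a - ξ * bb) - ξ * (q * z 0 ^ 2) := by
        rw [Hident, hq]; ring
      have c3 : 0 ≤ (1 - ξ) * ρ := mul_nonneg (by linarith) hρ.le
      nlinarith [mul_le_mul_of_nonneg_left h2 c3]
    refine ⟨hD, ?_⟩
    by_cases hξe : ξ = 1
    · -- ρ' = 0 edge case
      have hθe : θ = 0 := by linarith [hξ1θ, hξe.ge]
      have hqe : q = 0 := hθq hθe
      have hc0 : (1 - t1) * m 0 - t2 * m 1 = 0 := by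
        have h' : ((1 - t1) * m 0 - t2 * m 1) ^ 2 = 0 := by rw [← hq, hqe]
        exact pow_eq_zero_iff (n := 2) (by norm_num) |>.mp h'
      have HAeq : 2 * (z ⬝ᵥ ((E - ξ • (T * E * Tᵀ)) *ᵥ z))
          = (a - ξ * bb) + ρ⁻¹ * ((m ⬝ᵥ z) ^ 2 - ξ * ((T *ᵥ m) ⬝ᵥ z) ^ 2) := by
        rw [hadef, hbbdef]
        simp only [pTensor, hT, Matrix.mulVec, Matrix.mul_apply, dotProduct,
          Fin.sum_univ_two, Matrix.sub_apply, Matrix.smul_apply, Matrix.transpose_apply,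
          vecMulVec_apply, smul_eq_mul, Pi.sub_apply, Pi.smul_apply,
          Matrix.cons_val', Matrix.cons_val_zero, Matrix.cons_val_one, Matrix.head_cons,
          Matrix.empty_val', Matrix.cons_val_fin_one, Matrix.head_fin_const, Matrix.of_apply]
        field_simp
        ring
      have Hxy : (m ⬝ᵥ z) - ((T *ᵥ m) ⬝ᵥ z) = ((1 - t1) * m 0 - t2 * m 1) * z 0 := by
        simp [hT, Matrix.mulVec, dotProduct, Fin.sum_univ_two]
        ring
      have hxy : (m ⬝ᵥ z) = ((T *ᵥ m) ⬝ᵥ z) := by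
        rw [hc0] at Hxy; linarith [Hxy]
      have h2' : 0 ≤ a - ξ * bb := by
        have := h2; rw [hθe] at this; linarith
      have hz : ρ⁻¹ * ((m ⬝ᵥ z) ^ 2 - ξ * ((T *ᵥ m) ⬝ᵥ z) ^ 2) = 0 := by
        rw [hxy, hξe]; ring
      rw [hz] at HAeq
      linarith [HAeq, h2']
    · have hξlt : ξ < 1 := lt_of_le_of_ne hξ1 hξe
      have hρpos : 0 < ρ - ξ * ρ := by nlinarith
      nlinarith [hD, sq_nonneg ((m - ξ • (T *ᵥ m)) ⬝ᵥ z)]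
  refine ⟨?_, ?_, ?_⟩
  · show 0 ≤ ρ - ξ * ρ
    nlinarith
  · show (E - ξ • (T * E * Tᵀ)).IsSymm
    have hEs : Eᵀ = E := hE
    unfold Matrix.IsSymm
    rw [Matrix.transpose_sub, Matrix.transpose_smul, Matrix.transpose_mul,
      Matrix.transpose_mul, Matrix.transpose_transpose, hEs, Matrix.mul_assoc]
  · intro z u
    obtain ⟨h1, h2⟩ := key z
    show 0 ≤ phi (ρ - ξ * ρ) (m - ξ • (T *ᵥ m)) (E - ξ • (T * E * Tᵀ)) z u
    unfold phi
    by_cases hξe : ξ = 1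
    · have hρ0 : ρ - ξ * ρ = 0 := by rw [hξe]; ring
      have hmz : (m - ξ • (T *ᵥ m)) ⬝ᵥ z = 0 := by
        rw [hρ0] at h1
        nlinarith [sq_nonneg ((m - ξ • (T *ᵥ m)) ⬝ᵥ z)]
      rw [hρ0, hmz]
      simpa using h2
    · have hξlt : ξ < 1 := lt_of_le_of_ne hξ1 hξe
      have hρpos : 0 < ρ - ξ * ρ := by nlinarith
      nlinarith [sq_nonneg ((ρ - ξ * ρ) * (u ⬝ᵥ z) - (m - ξ • (T *ᵥ m)) ⬝ᵥ z)]
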